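/- Let f_y be a choice function for the variable y depending on variables v_1,…,v_t and x, and suppose the choice function f_x for x depends only on variables u_1,…,u_s with {u_1,…,u_s} ⊆ {v_1,…,v_t}. Then the composite function g_y(v_1,…,v_t) := f_y(v_1,…,v_t, f_x(u_1,…,u_s)) is a well-defined choice function for y depending only on v_1,…,v_t, and any play of the semantic game in which Éloïse uses f_x for x and g_y for y produces the same outcomes as using f_x for x and f_y for y; hence a winning strategy for Éloïse in G(φ^{y←x},M) induces one in G(φ,M) whenever every variable visible to x is visible to y. -/

import Mathlib

/-! Core model of prenex IF sentences and their imperfect-information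
game semantics.

A quantifier prefix is a list of triples `(isUniversal, variable, slash set)`.
A (prenex) IF sentence is such a prefix together with a quantifier-free
matrix `QF` interpreted in a structure `(M, I)`.  A strategy assigns to each
quantifier position a choice function on assignments; admissibility says the
choice function only depends on the variables visible at that position
(the superordinated variables minus the slash set).  Truth = existence of a
winning strategy for Éloïse, falsity = for Abélard. -/

abbrev Var := ℕ
abbrev Quant := Bool × Var × Finset Var   -- (isUniversal?, variable, slash set)
abbrev QPrefix := List Quant

def qUniv (Q : QPrefix) (i : ℕ) : Prop := (Q.getD i default).1 = true
def qvar (Q : QPrefix) (i : ℕ) : Var := (Q.getD i default).2.1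
def qslash (Q : QPrefix) (i : ℕ) : Finset Var := (Q.getD i default).2.2

/-- variables quantified superordinated to position `i`. -/
def varsBefore (Q : QPrefix) (i : ℕ) : Finset Var :=
  ((Q.take i).map (fun q => q.2.1)).toFinset

/-- the variables visible at position `i`. -/
def visible (Q : QPrefix) (i : ℕ) : Finset Var := varsBefore Q i \ qslash Q i

def agreeOn {M : Type*} (s t : Var → M) (A : Finset Var) : Prop :=
  ∀ v ∈ A, s v = t v

/-- A (pure) strategy: a choice function for every quantifier position. -/
abbrev Strat (M : Type*) := ℕ → (Var → M) → M

/-- Admissibility of an Éloïse strategy: at each existential position its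
choice function depends only on the visible variables. -/
def EAdmissible {M : Type*} (Q : QPrefix) (σ : Strat M) : Prop :=
  ∀ i, i < Q.length → ¬ qUniv Q i →
    ∀ s t : Var → M, agreeOn s t (visible Q i) → σ i s = σ i t

/-- Admissibility of an Abélard strategy (dually, at universal positions). -/
def AAdmissible {M : Type*} (Q : QPrefix) (τ : Strat M) : Prop :=
  ∀ i, i < Q.length → qUniv Q i →
    ∀ s t : Var → M, agreeOn s t (visible Q i) → τ i s = τ i t

/-- The terminal assignment of the play where Éloïse follows `σ` and
Abélard follows `τ`. -/
def outcome {M : Type*} (σ τ : Strat M) : QPrefix → ℕ → (Var → M) → (Var → M)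
  | [], _, s => s
  | q :: rest, i, s =>
      outcome σ τ rest (i + 1)
        (Function.update s q.2.1 (if q.1 then τ i s else σ i s))

/-- Quantifier-free matrices (atomic and negated atomic formulas, ∧, ∨). -/
inductive QF where
  | rel  : ℕ → List Var → QF
  | nrel : ℕ → List Var → QF
  | eq   : Var → Var → QF
  | neq  : Var → Var → QF
  | and  : QF → QF → QF
  | or   : QF → QF → QF

def QF.eval {M : Type*} (I : ℕ → List M → Prop) (s : Var → M) : QF → Prop
  | rel r ts => I r (ts.map s)
  | nrel r ts => ¬ I r (ts.map s)
  | eq a b => s a = s b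
  | neq a b => s a ≠ s b
  | and φ ψ => φ.eval I s ∧ ψ.eval I s
  | or φ ψ => φ.eval I s ∨ ψ.eval I s

/-- Truth of the prenex IF sentence `Q⃗ψ` in the structure `(M, I)`:
Éloïse has a winning strategy in the semantic game. -/
def TrueIn (M : Type*) (I : ℕ → List M → Prop) (Q : QPrefix) (ψ : QF) : Prop :=
  ∃ σ : Strat M, EAdmissible Q σ ∧
    ∀ τ : Strat M, ∀ s₀ : Var → M, ψ.eval I (outcome σ τ Q 0 s₀)

/-- Falsity: Abélard has a winning strategy. -/
def FalseIn (M : Type*) (I : ℕ → List M → Prop) (Q : QPrefix) (ψ : QF) : Prop :=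
  ∃ τ : Strat M, AAdmissible Q τ ∧
    ∀ σ : Strat M, ∀ s₀ : Var → M, ¬ ψ.eval I (outcome σ τ Q 0 s₀)

/-- `φ^{y←x}`: remove `x` from the slash set of the quantifier at position `j`. -/
def removeSlash (Q : QPrefix) (j : ℕ) (x : Var) : QPrefix :=
  Q.set j ((Q.getD j default).1, (Q.getD j default).2.1,
    (Q.getD j default).2.2.erase x)

/-- An I∃∃ declaration of independence: position `iy` (existential) declares
independence from the existential position `ix` superordinated to it. -/
def IEE (Q : QPrefix) (ix iy : ℕ) : Prop :=
  ix < iy ∧ iy < Q.length ∧ ¬ qUniv Q ix ∧ ¬ qUniv Q iy ∧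
    qvar Q ix ∈ qslash Q iy

/-- Sameness of (three-valued) truth values on `(M,I)`. -/
def SameTV (M : Type*) (I : ℕ → List M → Prop) (Q Q' : QPrefix) (ψ : QF) : Prop :=
  (TrueIn M I Q ψ ↔ TrueIn M I Q' ψ) ∧ (FalseIn M I Q ψ ↔ FalseIn M I Q' ψ)

/-- Relevance of the I∃∃ at `(ix, iy)` in `Q⃗`: some sentence beginning with
`Q⃗` changes its truth value on some structure when the declaration of
independence is removed. -/
def Relevant (Q : QPrefix) (ix iy : ℕ) : Prop :=
  ∃ (R : QPrefix) (ψ : QF) (M : Type) (I : ℕ → List M → Prop),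
    ¬ SameTV M I (Q ++ R) (removeSlash Q iy (qvar Q ix) ++ R) ψ

/-- A broken signalling sequence
`((∀v_k/V_k),(∃v_{k-1}/V_{k-1}),…,(∃v_1/V_1),(∃x/X),(∃y/Y))` in `Q⃗`,
ending with positions `ix` (of `x`) and `iy` (of `y`); `l = [i_1, …, i_k]`
lists the positions of `v_1, …, v_k`. -/
def BrokenSignalling (Q : QPrefix) (ix iy : ℕ) : Prop :=
  ∃ l : List ℕ, l ≠ [] ∧
    l.head! < ix ∧ qvar Q l.head! ∉ qslash Q ix ∧
    List.Chain' (fun a b => b < a ∧ qvar Q b ∉ qslash Q a) l ∧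
    (∀ i ∈ l.dropLast, ¬ qUniv Q i) ∧
    qUniv Q l.getLast! ∧
    (∀ i ∈ l, qvar Q i ∈ qslash Q iy)

section Stmt18Aux

lemma nodup_getElem_not_mem_take {α : Type*} (l : List α) (i j : ℕ)
    (hn : l.Nodup) (hij : i ≤ j) (hj : j < l.length) : l[j] ∉ l.take i := by
  intro hmem
  have h2 : l[j] ∈ l.drop i := by
    have hlen : j - i < (l.drop i).length := by simp [List.length_drop]; omega
    have : (l.drop i)[j - i] = l[j] := by
      rw [List.getElem_drop]; congr 1; omega
    rw [← this]; exact List.getElem_mem _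
  rw [← List.take_append_drop i l] at hn
  exact (List.nodup_append'.mp hn).2.2 hmem h2

lemma varsBefore_eq_map (Q : QPrefix) (i : ℕ) :
    varsBefore Q i = ((Q.map (fun q => q.2.1)).take i).toFinset := by
  simp [varsBefore, List.map_take]

lemma qvar_eq_getElem (Q : QPrefix) (i : ℕ) (h : i < Q.length) :
    qvar Q i = (Q.map (fun q => q.2.1))[i]'(by simpa using h) := by
  unfold qvar
  rw [List.getD_eq_getElem Q default h, List.getElem_map]

lemma qvar_not_mem_varsBefore (Q : QPrefix)
    (hreg : (Q.map (fun q => q.2.1)).Nodup) (i j : ℕ)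
    (hij : i ≤ j) (hj : j < Q.length) : qvar Q j ∉ varsBefore Q i := by
  rw [varsBefore_eq_map, qvar_eq_getElem Q j hj, List.mem_toFinset]
  exact nodup_getElem_not_mem_take _ i j hreg hij (by simpa using hj)

lemma qvar_mem_varsBefore (Q : QPrefix) (i j : ℕ)
    (hij : i < j) (hi : i < Q.length) : qvar Q i ∈ varsBefore Q j := by
  rw [varsBefore_eq_map, qvar_eq_getElem Q i hi, List.mem_toFinset]
  have hh : i < ((Q.map (fun q => q.2.1)).take j).length := by simp; omega
  have : ((Q.map (fun q => q.2.1)).take j)[i] = (Q.map (fun q => q.2.1))[i]'(by simpa using hi) :=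
    List.getElem_take ..
  exact this ▸ List.getElem_mem hh

lemma rs_length (Q : QPrefix) (iy : ℕ) (x : Var) :
    (removeSlash Q iy x).length = Q.length := by simp [removeSlash]

lemma getD_rs (Q : QPrefix) (iy : ℕ) (x : Var) (h : iy < Q.length) (j : ℕ) :
    (removeSlash Q iy x).getD j default =
      if j = iy then ((Q.getD iy default).1, (Q.getD iy default).2.1,
        (Q.getD iy default).2.2.erase x) else Q.getD j default := by
  by_cases hj : j < Q.length
  · rw [List.getD_eq_getElem _ default (by simpa [rs_length] using hj),
      List.getD_eq_getElem Q default hj]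
    unfold removeSlash
    rw [List.getElem_set]
    by_cases hji : j = iy <;> simp [hji, eq_comm (a := iy)]
  · have hji : j ≠ iy := by omega
    rw [if_neg hji, List.getD_eq_default _ default (by simpa [rs_length] using hj),
      List.getD_eq_default Q default (by omega)]

lemma qUniv_rs (Q : QPrefix) (iy : ℕ) (x : Var) (h : iy < Q.length) (j : ℕ) :
    qUniv (removeSlash Q iy x) j ↔ qUniv Q j := by
  unfold qUniv; rw [getD_rs Q iy x h j]
  by_cases hj : j = iy <;> simp [hj]

lemma qvar_rs (Q : QPrefix) (iy : ℕ) (x : Var) (h : iy < Q.length) (j : ℕ) :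
    qvar (removeSlash Q iy x) j = qvar Q j := by
  unfold qvar; rw [getD_rs Q iy x h j]
  by_cases hj : j = iy <;> simp [hj]

lemma qslash_rs_ne (Q : QPrefix) (iy : ℕ) (x : Var) (h : iy < Q.length)
    (j : ℕ) (hj : j ≠ iy) : qslash (removeSlash Q iy x) j = qslash Q j := by
  unfold qslash; rw [getD_rs Q iy x h j, if_neg hj]

lemma qslash_rs_eq (Q : QPrefix) (iy : ℕ) (x : Var) (h : iy < Q.length) :
    qslash (removeSlash Q iy x) iy = (qslash Q iy).erase x := by
  unfold qslash; rw [getD_rs Q iy x h iy, if_pos rfl]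

lemma varsBefore_rs (Q : QPrefix) (iy : ℕ) (x : Var) (h : iy < Q.length) (j : ℕ) :
    varsBefore (removeSlash Q iy x) j = varsBefore Q j := by
  have hm : (removeSlash Q iy x).map (fun q => q.2.1) = Q.map (fun q => q.2.1) := by
    unfold removeSlash
    rw [List.map_set]
    apply List.ext_getElem (by simp)
    intro k h1 h2
    rw [List.getElem_set]
    by_cases hk : iy = k
    · subst hk
      rw [if_pos rfl, List.getElem_map, List.getD_eq_getElem Q default h]
    · rw [if_neg hk]
  rw [varsBefore_eq_map, varsBefore_eq_map, hm]

lemma visible_rs_ne (Q : QPrefix) (iy : ℕ) (x : Var) (h : iy < Q.length)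
    (j : ℕ) (hj : j ≠ iy) : visible (removeSlash Q iy x) j = visible Q j := by
  unfold visible
  rw [varsBefore_rs Q iy x h, qslash_rs_ne Q iy x h j hj]

lemma visible_rs_eq (Q : QPrefix) (iy : ℕ) (x : Var) (h : iy < Q.length)
    (hmem : x ∈ varsBefore Q iy) :
    visible (removeSlash Q iy x) iy = insert x (visible Q iy) := by
  unfold visible
  rw [varsBefore_rs Q iy x h, qslash_rs_eq Q iy x h]
  ext v
  simp only [Finset.mem_sdiff, Finset.mem_erase, Finset.mem_insert]
  constructor
  · rintro ⟨hv, hv2⟩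
    by_cases hvx : v = x
    · exact Or.inl hvx
    · exact Or.inr ⟨hv, fun hb => hv2 ⟨hvx, hb⟩⟩
  · rintro (rfl | ⟨hv, hv2⟩)
    · exact ⟨hmem, fun hb => hb.1 rfl⟩
    · exact ⟨hv, fun hb => hv2 hb.2⟩

end Stmt18Aux

lemma varsBefore_mono (Q : QPrefix) {i j : ℕ} (h : i ≤ j) :
    varsBefore Q i ⊆ varsBefore Q j := by
  intro v hv
  rw [varsBefore_eq_map, List.mem_toFinset] at *
  have : (Q.map (fun q => q.2.1)).take i = ((Q.map (fun q => q.2.1)).take j).take i := by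
    rw [List.take_take, min_eq_left h]
  rw [this] at hv
  exact List.take_subset _ _ hv

lemma stmt18_outcome (Q : QPrefix) (ix iy : ℕ) (x : Var)
    (hreg : (Q.map (fun q => q.2.1)).Nodup)
    (hxy : ix < iy) (hylen : iy < Q.length)
    (hxE : ¬ qUniv Q ix) (hyE : ¬ qUniv Q iy)
    (hx : qvar Q ix = x)
    {M : Type*} (σ τ : Strat M)
    (hadm : EAdmissible (removeSlash Q iy x) σ) :
    ∀ n i s, Q.length - i ≤ n →
      (i ≤ ix ∨ (i ≤ iy ∧ σ ix s = s x) ∨ iy < i) →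
      outcome (fun i s => if i = iy then σ iy (Function.update s x (σ ix s)) else σ i s)
          τ (Q.drop i) i s =
        outcome σ τ ((removeSlash Q iy x).drop i) i s := by
  have hixlen : ix < Q.length := by omega
  have hxvb : x ∉ varsBefore Q ix := by
    rw [← hx]; exact qvar_not_mem_varsBefore Q hreg ix ix le_rfl hixlen
  have hbx : Q[ix].1 = false := by
    have := List.getD_eq_getElem Q default hixlen
    unfold qUniv at hxE; rw [this] at hxE
    exact Bool.eq_false_iff.mpr hxE
  have hxvar : Q[ix].2.1 = x := by
    rw [← hx]; unfold qvar; rw [List.getD_eq_getElem Q default hixlen]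
  have hadmx : ∀ s t : Var → M, agreeOn s t (visible Q ix) → σ ix s = σ ix t := by
    intro s t hst
    refine hadm ix (by rw [rs_length]; omega)
      (fun h => hxE ((qUniv_rs Q iy x hylen ix).mp h)) s t ?_
    rwa [visible_rs_ne Q iy x hylen ix (by omega)]
  intro n
  induction n with
  | zero =>
    intro i s hn _
    have hle : Q.length ≤ i := by omega
    rw [List.drop_eq_nil_of_le hle,
      List.drop_eq_nil_of_le (by rw [rs_length]; exact hle)]
    rfl
  | succ n ih =>
    intro i s hn H
    by_cases hi : i < Q.length
    · rw [List.drop_eq_getElem_cons hi,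
        List.drop_eq_getElem_cons (show i < (removeSlash Q iy x).length by
          rw [rs_length]; exact hi)]
      simp only [outcome]
      by_cases hiy : i = iy
      · -- case i = iy
        subst hiy
        have hrsi : (removeSlash Q i x)[i]'(by rw [rs_length]; exact hi) =
            ((Q.getD i default).1, (Q.getD i default).2.1,
              (Q.getD i default).2.2.erase x) := by
          unfold removeSlash; rw [List.getElem_set, if_pos rfl]
        have hby : Q[i].1 = false := by
          have := List.getD_eq_getElem Q default hi
          unfold qUniv at hyE; rw [this] at hyE
          exact Bool.eq_false_iff.mpr hyE
        have hgd : Q.getD i default = Q[i] := List.getD_eq_getElem Q default hi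
        rcases H with h1 | ⟨h2a, h2b⟩ | h3
        · omega
        · rw [hrsi]
          simp only [hgd, hby, if_true, eq_self_iff_true, Bool.false_eq_true, if_false]
          rw [h2b, Function.update_eq_self]
          exact ih (i + 1) _ (by omega) (Or.inr (Or.inr (by omega)))
        · omega
      · -- case i ≠ iy
        have hrsi : (removeSlash Q iy x)[i]'(by rw [rs_length]; exact hi) = Q[i] := by
          unfold removeSlash; rw [List.getElem_set, if_neg (fun h => hiy h.symm)]
        rw [hrsi]
        have hif : (i = iy) = False := by simp [hiy]
        simp only [hif, if_false]
        apply ih (i + 1) _ (by omega)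
        by_cases hiix : i ≤ ix
        · by_cases hieq : i = ix
          · -- i = ix : establish the invariant
            subst hieq
            refine Or.inr (Or.inl ⟨by omega, ?_⟩)
            have hupd : Function.update s Q[i].2.1
                (if Q[i].1 = true then τ i s else σ i s)
                  = Function.update s x (σ i s) := by
              rw [hxvar, hbx]; simp
            rw [hupd, Function.update_self]
            apply hadmx
            intro v hv
            have hvx : v ≠ x := fun h =>
              hxvb (h ▸ (Finset.sdiff_subset hv))
            rw [Function.update_of_ne hvx]
          · exact Or.inl (by omega)
        · push_neg at hiix
          rcases H with h1 | ⟨h2a, h2b⟩ | h3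
          · omega
          · have hilt : i < iy := by omega
            refine Or.inr (Or.inl ⟨by omega, ?_⟩)
            have hqvi : Q[i].2.1 = qvar Q i := by
              unfold qvar; rw [List.getD_eq_getElem Q default hi]
            have hnotmem : qvar Q i ∉ varsBefore Q (ix + 1) :=
              qvar_not_mem_varsBefore Q hreg (ix + 1) i (by omega) hi
            have hxmem : x ∈ varsBefore Q (ix + 1) := by
              rw [← hx]; exact qvar_mem_varsBefore Q ix (ix + 1) (by omega) hixlen
            have hvne : Q[i].2.1 ≠ x := by
              rw [hqvi]; exact fun h => hnotmem (h ▸ hxmem)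
            have h1 : σ ix (Function.update s Q[i].2.1
                (if Q[i].1 = true then τ i s else σ i s)) = σ ix s := by
              apply hadmx
              intro v hv
              have hvv : v ≠ Q[i].2.1 := by
                rw [hqvi]
                intro h
                exact hnotmem (h ▸ (varsBefore_mono Q (by omega) (Finset.sdiff_subset hv)))
              rw [Function.update_of_ne hvv]
            rw [h1, Function.update_of_ne (fun h => hvne h.symm), h2b]
          · exact Or.inr (Or.inr (by omega))
    · push_neg at hi
      rw [List.drop_eq_nil_of_le hi,
        List.drop_eq_nil_of_le (by rw [rs_length]; exact hi)]
      rfl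

/-- if every variable visible to `x` is visible to `y`
(the I∃∃ does not weakly break knowledge memory), then composing `y`'s
choice function with `x`'s choice function gives an admissible strategy for
`G(φ,M)` producing the same outcomes, so a winning strategy for Éloïse in
`G(φ^{y←x},M)` induces one in `G(φ,M)`. -/
theorem stmt18 (Q : QPrefix) (ix iy : ℕ) (x : Var)
    (hreg : (Q.map (fun q => q.2.1)).Nodup)
    (hIEE : IEE Q ix iy) (hx : qvar Q ix = x)
    (hsub : visible Q ix ⊆ visible Q iy)
    (M : Type*) (I : ℕ → List M → Prop) (ψ : QF)
    (σ : Strat M) (hadm : EAdmissible (removeSlash Q iy x) σ) :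
    EAdmissible Q
      (fun i s => if i = iy then σ iy (Function.update s x (σ ix s)) else σ i s) ∧
    (∀ τ : Strat M, ∀ s₀ : Var → M,
      outcome (fun i s => if i = iy then σ iy (Function.update s x (σ ix s)) else σ i s)
          τ Q 0 s₀ =
        outcome σ τ (removeSlash Q iy x) 0 s₀) ∧
    ((∀ τ : Strat M, ∀ s₀ : Var → M,
        ψ.eval I (outcome σ τ (removeSlash Q iy x) 0 s₀)) →
      TrueIn M I Q ψ) := by
  obtain ⟨hxy, hylen, hxE, hyE, hxs⟩ := hIEE
  have hixlen : ix < Q.length := by omega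
  have hxsl : x ∈ qslash Q iy := hx ▸ hxs
  have hxvb : x ∈ varsBefore Q iy := hx ▸ qvar_mem_varsBefore Q ix iy hxy hixlen
  have hxnv : x ∉ visible Q iy := fun h => (Finset.mem_sdiff.mp h).2 hxsl
  have hvis : visible (removeSlash Q iy x) iy = insert x (visible Q iy) :=
    visible_rs_eq Q iy x hylen hxvb
  have hadmE : EAdmissible Q
      (fun i s => if i = iy then σ iy (Function.update s x (σ ix s)) else σ i s) := by
    intro i hi hU s t hst
    dsimp only
    by_cases hiy : i = iy
    · rw [if_pos hiy, if_pos hiy]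
      have hst' : agreeOn s t (visible Q iy) := by rwa [hiy] at hst
      have hc : σ ix s = σ ix t := by
        refine hadm ix (by rw [rs_length]; omega)
          (fun h => hxE ((qUniv_rs Q iy x hylen ix).mp h)) s t ?_
        rw [visible_rs_ne Q iy x hylen ix (by omega)]
        exact fun v hv => hst' v (hsub hv)
      rw [hc]
      refine hadm iy (by rw [rs_length]; omega)
        (fun h => hyE ((qUniv_rs Q iy x hylen iy).mp h)) _ _ ?_
      intro v hv
      rw [hvis] at hv
      rcases Finset.mem_insert.mp hv with rfl | hv2
      · rw [Function.update_self, Function.update_self]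
      · have hvx : v ≠ x := fun h => hxnv (h ▸ hv2)
        rw [Function.update_of_ne hvx, Function.update_of_ne hvx]
        exact hst' v hv2
    · rw [if_neg hiy, if_neg hiy]
      refine hadm i (by rw [rs_length]; exact hi)
        (fun h => hU ((qUniv_rs Q iy x hylen i).mp h)) s t ?_
      rwa [visible_rs_ne Q iy x hylen i hiy]
  have hout : ∀ τ : Strat M, ∀ s₀ : Var → M,
      outcome (fun i s => if i = iy then σ iy (Function.update s x (σ ix s)) else σ i s)
        τ Q 0 s₀ = outcome σ τ (removeSlash Q iy x) 0 s₀ := by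
    intro τ s₀
    have := stmt18_outcome Q ix iy x hreg hxy hylen hxE hyE hx σ τ hadm
      Q.length 0 s₀ (by omega) (Or.inl (Nat.zero_le _))
    simpa [List.drop_zero] using this
  refine ⟨hadmE, hout, fun hwin => ?_⟩
  exact ⟨_, hadmE, fun τ s₀ => by rw [hout τ s₀]; exact hwin τ s₀⟩
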